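/- (Le Cam's Poisson approximation) Let X₁, …, Xₙ be independent Bernoulli random variables with E[X_j] = p_j for each j, let Z = Σ_{i=1}^n Xᵢ and μ = Σ_{j=1}^n p_j > 0. Then d_TV(Z, Poi(μ)) ≤ (Σ_{i=1}^n pᵢ²)/(Σ_{i=1}^n pᵢ), where Poi(μ) denotes the Poisson distribution with mean μ. -/

import Mathlib

open MeasureTheory ProbabilityTheory Finset

namespace LeCamAux

/-- The Poisson pmf as a real function. -/
noncomputable def pp (l : ℝ) (j : ℕ) : ℝ := Real.exp (-l) * l ^ j / (Nat.factorial j)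

lemma pp_nonneg {l : ℝ} (hl : 0 < l) (j : ℕ) : 0 ≤ pp l j := by
  unfold pp; positivity

lemma hasSum_pp {l : ℝ} (hl : 0 ≤ l) : HasSum (pp l) 1 := by
  have h := ProbabilityTheory.poissonPMFRealSum l.toNNReal
  have : (fun n => poissonPMFReal l.toNNReal n) = pp l := by
    funext n
    simp [poissonPMFReal, pp, Real.coe_toNNReal l hl]
  rw [← this]; exact h

lemma summable_pp {l : ℝ} (hl : 0 ≤ l) : Summable (pp l) := (hasSum_pp hl).summable

/-- Stein coefficient. -/
noncomputable def CC (l : ℝ) (k : ℕ) : ℝ := (Nat.factorial k) * Real.exp l / l ^ (k + 1)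

lemma CC_nonneg {l : ℝ} (hl : 0 < l) (k : ℕ) : 0 ≤ CC l k := by
  unfold CC; positivity

lemma CC_mul_pp {l : ℝ} (hl : 0 < l) (k : ℕ) : CC l k * pp l k = 1 / l := by
  unfold CC pp
  rw [Real.exp_neg]
  have h1 : (Nat.factorial k : ℝ) ≠ 0 := Nat.cast_ne_zero.2 (Nat.factorial_ne_zero k)
  have h2 : l ≠ 0 := hl.ne'
  have h3 : Real.exp l ≠ 0 := Real.exp_ne_zero l
  field_simp
  ring

lemma stepup {l : ℝ} (hl : 0 < l) {m k : ℕ} (hmk : m ≤ k) :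
    CC l k * pp l m ≤ CC l (k + 1) * pp l (m + 1) := by
  have h2 : l ≠ 0 := hl.ne'
  have e1 : CC l k * pp l m = (Nat.factorial k / Nat.factorial m) * (l ^ m / l ^ (k + 1)) := by
    unfold CC pp; rw [Real.exp_neg]; field_simp
  have e2 : CC l (k + 1) * pp l (m + 1)
      = (Nat.factorial (k + 1) / Nat.factorial (m + 1)) * (l ^ m / l ^ (k + 1)) := by
    unfold CC pp; rw [Real.exp_neg]; field_simp; ring
  rw [e1, e2]
  have hpow : 0 ≤ l ^ m / l ^ (k + 1) := by positivity
  refine mul_le_mul_of_nonneg_right ?_ hpow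
  rw [div_le_div_iff₀ (by positivity) (by positivity)]
  have : (Nat.factorial k) * (Nat.factorial (m + 1)) ≤ (Nat.factorial (k + 1)) * (Nat.factorial m) := by
    rw [Nat.factorial_succ, Nat.factorial_succ]
    calc (Nat.factorial k) * ((m + 1) * Nat.factorial m)
        = (m + 1) * (Nat.factorial k * Nat.factorial m) := by ring
      _ ≤ (k + 1) * (Nat.factorial k * Nat.factorial m) := by
          exact Nat.mul_le_mul_right _ (by omega)
      _ = (k + 1) * Nat.factorial k * Nat.factorial m := by ring
  exact_mod_cast this

lemma stepdown {l : ℝ} (hl : 0 < l) (k t : ℕ) :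
    CC l (k + 1) * pp l (k + 1 + t + 1) ≤ CC l k * pp l (k + t + 1) := by
  have h2 : l ≠ 0 := hl.ne'
  have e1 : CC l (k + 1) * pp l (k + 1 + t + 1)
      = (Nat.factorial (k + 1) / Nat.factorial (k + t + 2)) * l ^ t := by
    unfold CC pp; rw [Real.exp_neg]
    have : k + 1 + t + 1 = k + t + 2 := by omega
    rw [this]
    have : l ^ (k + t + 2) = l ^ (k + 2) * l ^ t := by rw [← pow_add]; ring_nf
    rw [this]
    field_simp
  have e2 : CC l k * pp l (k + t + 1)
      = (Nat.factorial k / Nat.factorial (k + t + 1)) * l ^ t := by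
    unfold CC pp; rw [Real.exp_neg]
    have : l ^ (k + t + 1) = l ^ (k + 1) * l ^ t := by rw [← pow_add]; ring_nf
    rw [this]
    field_simp
  rw [e1, e2]
  refine mul_le_mul_of_nonneg_right ?_ (by positivity)
  rw [div_le_div_iff₀ (by positivity) (by positivity)]
  have : (Nat.factorial (k + 1)) * (Nat.factorial (k + t + 1)) ≤ (Nat.factorial k) * (Nat.factorial (k + t + 2)) := by
    have h1 : Nat.factorial (k + 1) = (k + 1) * Nat.factorial k := Nat.factorial_succ k
    have h2 : Nat.factorial (k + t + 2) = (k + t + 2) * Nat.factorial (k + t + 1) := Nat.factorial_succ _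
    rw [h1, h2]
    calc (k + 1) * Nat.factorial k * Nat.factorial (k + t + 1)
        = (k + 1) * (Nat.factorial k * Nat.factorial (k + t + 1)) := by ring
      _ ≤ (k + t + 2) * (Nat.factorial k * Nat.factorial (k + t + 1)) := Nat.mul_le_mul_right _ (by omega)
      _ = Nat.factorial k * ((k + t + 2) * Nat.factorial (k + t + 1)) := by ring
  exact_mod_cast this

lemma tail_eq {l : ℝ} (hl : 0 < l) (k : ℕ) :
    1 - ∑ m ∈ range k, pp l m = ∑' t, pp l (t + k) := by
  have h := Summable.sum_add_tsum_nat_add (f := pp l) k (summable_pp hl.le)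
  have h1 : (∑' j, pp l j) = 1 := (hasSum_pp hl.le).tsum_eq
  rw [h1] at h
  linarith [h]

/-- `C (k+1) (1 - S (k+2)) ≤ C k (1 - S (k+1))`. -/
lemma step1 {l : ℝ} (hl : 0 < l) (k : ℕ) :
    CC l (k + 1) * (1 - ∑ m ∈ range (k + 2), pp l m)
      ≤ CC l k * (1 - ∑ m ∈ range (k + 1), pp l m) := by
  rw [tail_eq hl, tail_eq hl, ← tsum_mul_left, ← tsum_mul_left]
  have hs1 : Summable (fun t => CC l (k + 1) * pp l (t + (k + 2))) :=
    (((summable_nat_add_iff (k+2)).mpr (summable_pp hl.le))).mul_left _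
  have hs2 : Summable (fun t => CC l k * pp l (t + (k + 1))) :=
    (((summable_nat_add_iff (k+1)).mpr (summable_pp hl.le))).mul_left _
  refine Summable.tsum_le_tsum (fun t => ?_) hs1 hs2
  have e1 : t + (k + 2) = k + 1 + t + 1 := by omega
  have e2 : t + (k + 1) = k + t + 1 := by omega
  rw [e1, e2]
  exact stepdown hl k t

/-- `C k * S (k+1) ≤ C (k+1) * S (k+2)`. -/
lemma step2 {l : ℝ} (hl : 0 < l) (k : ℕ) :
    CC l k * (∑ m ∈ range (k + 1), pp l m)
      ≤ CC l (k + 1) * (∑ m ∈ range (k + 2), pp l m) := by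
  rw [Finset.sum_range_succ' (pp l) (k + 1)]
  rw [mul_sum, mul_add, mul_sum]
  have h1 : ∑ m ∈ range (k + 1), CC l k * pp l m
      ≤ ∑ m ∈ range (k + 1), CC l (k + 1) * pp l (m + 1) := by
    refine Finset.sum_le_sum (fun m hm => ?_)
    exact stepup hl (Nat.lt_succ_iff.mp (Finset.mem_range.mp hm))
  have h2 : 0 ≤ CC l (k + 1) * pp l 0 := mul_nonneg (CC_nonneg hl _) (pp_nonneg hl _)
  linarith

/-- the Stein equation solution -/
noncomputable def steinF (l : ℝ) (B : Set ℕ) (q : ℝ) : ℕ → ℝ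
  | 0 => 0
  | (k + 1) => CC l k * ∑ m ∈ range (k + 1), (B.indicator (pp l) m - q * pp l m)

lemma stein_eq {l : ℝ} (hl : 0 < l) (B : Set ℕ) (q : ℝ) (k : ℕ) :
    l * steinF l B q (k + 1) - k * steinF l B q k
      = B.indicator (fun _ => (1 : ℝ)) k - q := by
  have hfac : ∀ j : ℕ, (Nat.factorial j : ℝ) ≠ 0 :=
    fun j => Nat.cast_ne_zero.2 (Nat.factorial_ne_zero j)
  have hl0 : l ≠ 0 := hl.ne'
  have key : ∀ j : ℕ, B.indicator (pp l) j = (B.indicator (fun _ => (1:ℝ)) j) * pp l j := by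
    intro j
    by_cases h : j ∈ B <;> simp [Set.indicator_apply, h]
  cases k with
  | zero =>
      have hcp : l * (CC l 0 * pp l 0) = 1 := by
        rw [CC_mul_pp hl]; field_simp
      simp only [steinF, Nat.cast_zero, zero_mul, sub_zero]
      rw [Finset.sum_range_one, key 0]
      linear_combination (B.indicator (fun _ => (1:ℝ)) 0 - q) * hcp
  | succ k =>
      have hc : l * CC l (k + 1) = ((k : ℝ) + 1) * CC l k := by
        unfold CC
        rw [Nat.factorial_succ]
        push_cast
        field_simp
        ring
      have hcp : l * (CC l (k + 1) * pp l (k + 1)) = 1 := by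
        rw [CC_mul_pp hl]; field_simp
      simp only [steinF]
      rw [Finset.sum_range_succ, key (k + 1)]
      push_cast
      linear_combination (∑ m ∈ range (k + 1), (B.indicator (pp l) m - q * pp l m)) * hc
        + (B.indicator (fun _ => (1:ℝ)) (k+1) - q) * hcp

lemma summable_ind {l : ℝ} (hl : 0 < l) (B : Set ℕ) :
    Summable (fun j => B.indicator (pp l) j) :=
  (summable_pp hl.le).indicator B

lemma ind_nonneg {l : ℝ} (hl : 0 < l) (B : Set ℕ) (j : ℕ) :
    0 ≤ B.indicator (pp l) j :=
  Set.indicator_nonneg (fun j _ => pp_nonneg hl j) j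

/-- Upper bound on the increments of the Stein solution. -/
lemma delta_le {l : ℝ} (hl : 0 < l) (B : Set ℕ) (k : ℕ) :
    steinF l B (∑' j, B.indicator (pp l) j) (k + 2)
      - steinF l B (∑' j, B.indicator (pp l) j) (k + 1) ≤ 1 / l := by
  set q : ℝ := ∑' j, B.indicator (pp l) j with hq
  set S1 : ℝ := ∑ m ∈ range (k + 1), pp l m with hS1
  set S2 : ℝ := ∑ m ∈ range (k + 2), pp l m with hS2
  set A1 : ℝ := ∑ m ∈ range (k + 1), B.indicator (pp l) m with hA1
  have hA2 : A1 + B.indicator (pp l) (k+1) = ∑ m ∈ range (k + 2), B.indicator (pp l) m :=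
    (Finset.sum_range_succ (fun m => B.indicator (pp l) m) (k+1)).symm
  have hb : (0:ℝ) ≤ B.indicator (pp l) (k + 1) := ind_nonneg hl B _
  have hbp : B.indicator (pp l) (k + 1) ≤ pp l (k + 1) :=
    by by_cases h : (k+1) ∈ B <;> simp [Set.indicator_apply, h, pp_nonneg hl]
  -- expand steinF
  have e2 : steinF l B q (k + 2) = CC l (k + 1) * (A1 + B.indicator (pp l) (k+1)) - q * (CC l (k+1) * S2) := by
    show CC l (k + 1) * ∑ m ∈ range (k + 2), (B.indicator (pp l) m - q * pp l m) = _
    rw [Finset.sum_sub_distrib, ← Finset.mul_sum, mul_sub, Finset.sum_range_succ (fun m => B.indicator (pp l) m)]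
    ring
  have e1 : steinF l B q (k + 1) = CC l k * A1 - q * (CC l k * S1) := by
    show CC l k * ∑ m ∈ range (k + 1), (B.indicator (pp l) m - q * pp l m) = _
    rw [Finset.sum_sub_distrib, ← Finset.mul_sum, mul_sub]
    ring
  rw [e1, e2]
  -- notation
  set V : ℝ := CC l (k + 1) * S2 - CC l k * S1 with hV
  clear_value q S1 S2 A1 V
  have hVnn : 0 ≤ V := by rw [hV, hS1, hS2]; linarith [step2 hl k]
  have hqA : A1 + B.indicator (pp l) (k+1) ≤ q := by
    rw [hA2, hq]
    exact Summable.sum_le_tsum (range (k+2)) (fun j _ => ind_nonneg hl B j) (summable_ind hl B)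
  have hA1nn : 0 ≤ A1 := by
    rw [hA1]; exact Finset.sum_nonneg (fun j _ => ind_nonneg hl B j)
  have hD : CC l (k + 1) - CC l k - V ≤ 0 := by
    rw [hV, hS1, hS2]; linarith [step1 hl k]
  have hkey : CC l (k + 1) * pp l (k + 1) = 1 / l := CC_mul_pp hl (k + 1)
  -- the main estimate
  have hqV : (A1 + B.indicator (pp l) (k+1)) * V ≤ q * V := mul_le_mul_of_nonneg_right hqA hVnn
  have expand : CC l (k + 1) * (A1 + B.indicator (pp l) (k+1)) - q * (CC l (k+1) * S2)
      - (CC l k * A1 - q * (CC l k * S1))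
      = A1 * (CC l (k+1) - CC l k - V) + B.indicator (pp l) (k+1) * (CC l (k+1) - V)
        + ((A1 + B.indicator (pp l) (k+1)) * V - q * V) := by
    rw [hV]; ring
  rw [expand]
  have t1 : A1 * (CC l (k+1) - CC l k - V) ≤ 0 := mul_nonpos_of_nonneg_of_nonpos hA1nn hD
  have t2 : B.indicator (pp l) (k+1) * (CC l (k+1) - V) ≤ 1 / l := by
    have h1 : B.indicator (pp l) (k+1) * (CC l (k+1) - V) ≤ B.indicator (pp l) (k+1) * CC l (k+1) := by
      refine mul_le_mul_of_nonneg_left ?_ hb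
      linarith
    have h2 : B.indicator (pp l) (k+1) * CC l (k+1) ≤ pp l (k+1) * CC l (k+1) :=
      mul_le_mul_of_nonneg_right hbp (CC_nonneg hl _)
    have h3 : pp l (k+1) * CC l (k+1) = 1 / l := by rw [mul_comm]; exact hkey
    exact le_trans h1 (le_trans h2 (le_of_eq h3))
  linarith [t1, t2, hqV]

lemma tsum_ind_compl {l : ℝ} (hl : 0 < l) (B : Set ℕ) :
    (∑' j, (Bᶜ).indicator (pp l) j) = 1 - ∑' j, B.indicator (pp l) j := by
  have h1 : ∀ j, (Bᶜ).indicator (pp l) j = pp l j - B.indicator (pp l) j := by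
    intro j
    by_cases h : j ∈ B <;> simp [Set.indicator_apply, h]
  rw [tsum_congr h1, Summable.tsum_sub (summable_pp hl.le) (summable_ind hl B),
    (hasSum_pp hl.le).tsum_eq]

lemma steinF_compl {l : ℝ} (hl : 0 < l) (B : Set ℕ) (q : ℝ) (k : ℕ) :
    steinF l Bᶜ (1 - q) k = - steinF l B q k := by
  cases k with
  | zero => simp [steinF]
  | succ k =>
      show CC l k * ∑ m ∈ range (k+1), ((Bᶜ).indicator (pp l) m - (1 - q) * pp l m)
        = -(CC l k * ∑ m ∈ range (k+1), (B.indicator (pp l) m - q * pp l m))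
      rw [← mul_neg, ← Finset.sum_neg_distrib]
      congr 1
      refine Finset.sum_congr rfl (fun m _ => ?_)
      by_cases h : m ∈ B <;> simp [Set.indicator_apply, h] <;> ring

/-- Two-sided bound on the increments of the Stein solution. -/
lemma abs_delta_le {l : ℝ} (hl : 0 < l) (B : Set ℕ) (k : ℕ) :
    |steinF l B (∑' j, B.indicator (pp l) j) (k + 2)
      - steinF l B (∑' j, B.indicator (pp l) j) (k + 1)| ≤ 1 / l := by
  rw [abs_le]
  constructor
  · have h := delta_le hl Bᶜ k
    rw [tsum_ind_compl hl B] at h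
    rw [steinF_compl hl B _ (k+2), steinF_compl hl B _ (k+1)] at h
    linarith
  · exact delta_le hl B k

/-- identify the Poisson measure of a set with the real tsum. -/
lemma poisson_apply {l : ℝ} (hl : 0 < l) (B : Set ℕ) :
    ((poissonMeasure l.toNNReal) B).toReal = ∑' j, B.indicator (pp l) j := by
  rw [poissonMeasure, Measure.sum_apply _ MeasurableSpace.measurableSet_top]
  rw [ENNReal.tsum_toReal_eq]
  · refine tsum_congr (fun j => ?_)
    by_cases h : j ∈ B
    · rw [Set.indicator_of_mem h, Measure.smul_apply, smul_eq_mul, Measure.dirac_apply_of_mem h,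
        mul_one, ENNReal.toReal_ofReal (by positivity)]
      simp [pp, Real.coe_toNNReal l hl.le]
    · simp [h, Measure.dirac_apply' _ MeasurableSpace.measurableSet_top]
  · intro j
    rw [Measure.smul_apply, smul_eq_mul]
    exact ENNReal.mul_ne_top ENNReal.ofReal_ne_top (measure_ne_top _ _)

/-- integrability from a uniform bound -/
lemma integ {Ω : Type*} [MeasurableSpace Ω] (μ : Measure Ω) [IsProbabilityMeasure μ]
    {g : Ω → ℝ} (hg : Measurable g) {K : ℝ} (h : ∀ ω, |g ω| ≤ K) : Integrable g μ :=
  (integrable_const K).mono' hg.aestronglyMeasurable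
    (Filter.Eventually.of_forall fun ω => by simpa using h ω)

end LeCamAux

open LeCamAux

/-- Total variation distance between two distributions on `ℝ`:
`sup_{A measurable} |ν₁(A) - ν₂(A)|`. -/
noncomputable def dTV (ν₁ ν₂ : Measure ℝ) : ℝ :=
  ⨆ A : {s : Set ℝ // MeasurableSet s}, |(ν₁ A).toReal - (ν₂ A).toReal|

/-- The Poisson distribution with mean `m ≥ 0`, as a measure on `ℝ`. -/
noncomputable def poissonReal (m : ℝ) : Measure ℝ :=
  (ProbabilityTheory.poissonMeasure (Real.toNNReal m)).map (fun n : ℕ => (n : ℝ))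

/-- **Le Cam's Poisson approximation.** If `X₁, …, Xₙ` are independent Bernoulli
random variables with means `p₁, …, pₙ`, `Z = ∑ Xᵢ` and `m = ∑ pᵢ > 0`, then
`d_TV(Z, Poi(m)) ≤ (∑ pᵢ²)/(∑ pᵢ)`. -/
theorem le_cam_poisson_approximation
    {Ω : Type*} [MeasurableSpace Ω] (μ : Measure Ω) [IsProbabilityMeasure μ]
    (n : ℕ) (X : Fin n → Ω → ℝ) (hX : ∀ i, Measurable (X i))
    (hBer : ∀ i ω, X i ω = 0 ∨ X i ω = 1)
    (hindep : iIndepFun X μ)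
    (p : Fin n → ℝ) (hp : ∀ i, p i = ∫ ω, X i ω ∂μ)
    (hpos : 0 < ∑ i, p i) :
    dTV (μ.map (fun ω => ∑ i, X i ω)) (poissonReal (∑ i, p i))
      ≤ (∑ i, (p i) ^ 2) / (∑ i, p i) := by
  classical
  set l : ℝ := ∑ i, p i with hldef
  have hl : 0 < l := hpos
  have hRHS0 : 0 ≤ (∑ i, (p i) ^ 2) / l :=
    div_nonneg (Finset.sum_nonneg fun i _ => sq_nonneg _) hl.le
  unfold dTV
  refine Real.iSup_le (fun As => ?_) hRHS0
  obtain ⟨A, hA⟩ := As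
  -- basic objects
  set W : Ω → ℝ := fun ω => ∑ i, X i ω with hWdef
  have hWm : Measurable W := Finset.measurable_sum _ (fun i _ => hX i)
  set N : Ω → ℕ := fun ω => ∑ i, ⌊X i ω⌋₊ with hNdef
  have hNm : Measurable N := Finset.measurable_sum _ (fun i _ => Nat.measurable_floor.comp (hX i))
  have hfloor : ∀ i ω, ((⌊X i ω⌋₊ : ℝ)) = X i ω := by
    intro i ω; rcases hBer i ω with h | h <;> rw [h] <;> simp
  have hNcast : ∀ ω, ((N ω : ℝ)) = W ω := by
    intro ω
    show ((∑ i, ⌊X i ω⌋₊ : ℕ) : ℝ) = ∑ i, X i ω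
    push_cast
    exact Finset.sum_congr rfl fun i _ => hfloor i ω
  have hfle : ∀ i ω, ⌊X i ω⌋₊ ≤ 1 := by
    intro i ω; rcases hBer i ω with h | h <;> rw [h] <;> simp
  have hNle : ∀ ω, N ω ≤ n := by
    intro ω
    calc N ω ≤ ∑ _i : Fin n, 1 := Finset.sum_le_sum (fun i _ => hfle i ω)
      _ = n := by simp
  set B : Set ℕ := (fun k : ℕ => (k : ℝ)) ⁻¹' A with hBdef
  have hBmeas : MeasurableSet B := MeasurableSpace.measurableSet_top
  set q : ℝ := ∑' j, B.indicator (pp l) j with hq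
  set f : ℕ → ℝ := steinF l B q with hfdef
  -- Poisson side
  have hPoisson : ((poissonReal l) A).toReal = q := by
    rw [poissonReal, Measure.map_apply measurable_from_nat hA]
    exact poisson_apply hl B
  -- LHS measure side
  have hmap : ((μ.map W) A).toReal = (μ (N ⁻¹' B)).toReal := by
    rw [Measure.map_apply hWm hA]
    congr 2
    ext ω
    simp only [Set.mem_preimage, hBdef]
    rw [← hNcast ω]
  -- bound constant for f
  set Kf : ℝ := ∑ j ∈ Finset.range (n + 3), |f j| with hKf
  have hKfb : ∀ m : ℕ, m ≤ n + 2 → |f m| ≤ Kf := by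
    intro m hm
    exact Finset.single_le_sum (f := fun j => |f j|) (fun j _ => abs_nonneg _)
      (Finset.mem_range.mpr (by omega))
  have hXb : ∀ i ω, |X i ω| ≤ 1 := by
    intro i ω; rcases hBer i ω with h | h <;> rw [h] <;> norm_num
  -- integrabilities (global)
  have hg1m : Measurable (fun ω => f (N ω + 1)) :=
    (measurable_from_nat (f := fun m => f (m + 1))).comp hNm
  have hg1int : Integrable (fun ω => f (N ω + 1)) μ :=
    integ μ hg1m (fun ω => hKfb _ (by have := hNle ω; omega))
  have hfNm : Measurable (fun ω => f (N ω)) := (measurable_from_nat (f := f)).comp hNm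
  have hfNint : Integrable (fun ω => f (N ω)) μ :=
    integ μ hfNm (fun ω => hKfb _ (by have := hNle ω; omega))
  have hXifNint : ∀ i, Integrable (fun ω => X i ω * f (N ω)) μ := by
    intro i
    refine integ μ ((hX i).mul hfNm) (K := Kf) (fun ω => ?_)
    rw [abs_mul]
    calc |X i ω| * |f (N ω)| ≤ 1 * |f (N ω)| :=
          mul_le_mul_of_nonneg_right (hXb i ω) (abs_nonneg _)
      _ = |f (N ω)| := one_mul _
      _ ≤ Kf := hKfb _ (by have := hNle ω; omega)
  have hWfNint : Integrable (fun ω => W ω * f (N ω)) μ := by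
    have : (fun ω => W ω * f (N ω)) = fun ω => ∑ i, X i ω * f (N ω) := by
      funext ω; rw [hWdef]; rw [Finset.sum_mul]
    rw [this]
    exact integrable_finset_sum _ (fun i _ => hXifNint i)
  -- the per-i estimate
  have main_i : ∀ i : Fin n, ∃ t : ℝ, |t| ≤ 1 / l ∧
      p i * (∫ ω, f (N ω + 1) ∂μ) - (∫ ω, X i ω * f (N ω) ∂μ) = p i ^ 2 * t := by
    intro i
    set s : Finset (Fin n) := Finset.univ.erase i with hs
    set Wi : Ω → ℝ := fun ω => ∑ j ∈ s, X j ω with hWidef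
    have hWim : Measurable Wi := Finset.measurable_sum _ (fun j _ => hX j)
    set Ni : Ω → ℕ := fun ω => ∑ j ∈ s, ⌊X j ω⌋₊ with hNidef
    have hNicast : ∀ ω, ((Ni ω : ℝ)) = Wi ω := by
      intro ω
      show ((∑ j ∈ s, ⌊X j ω⌋₊ : ℕ) : ℝ) = ∑ j ∈ s, X j ω
      push_cast
      exact Finset.sum_congr rfl fun j _ => hfloor j ω
    have hNifloor : ∀ ω, ⌊Wi ω⌋₊ = Ni ω := by
      intro ω; rw [← hNicast ω, Nat.floor_natCast]
    have hNile : ∀ ω, Ni ω ≤ n := by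
      intro ω
      calc Ni ω ≤ ∑ _j ∈ s, 1 := Finset.sum_le_sum (fun j _ => hfle j ω)
        _ ≤ ∑ _j : Fin n, 1 := Finset.sum_le_sum_of_subset (Finset.subset_univ s)
        _ = n := by simp
    have hNsplit : ∀ ω, N ω = Ni ω + ⌊X i ω⌋₊ := by
      intro ω
      show ∑ j, ⌊X j ω⌋₊ = ∑ j ∈ s, ⌊X j ω⌋₊ + ⌊X i ω⌋₊
      rw [hs, ← Finset.add_sum_erase _ _ (Finset.mem_univ i)]
      omega
    have base : IndepFun Wi (X i) μ := by
      have h := hindep.indepFun_finsetSum_of_notMem hX (Finset.notMem_erase i Finset.univ)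
      have hWeq : Wi = ∑ j ∈ Finset.univ.erase i, X j := by
        funext ω; simp [hWidef, hs, Finset.sum_apply]
      rw [hWeq]
      exact h
    -- φ functions
    set φ1 : ℝ → ℝ := fun x => f (⌊x⌋₊ + 1) with hφ1
    set φ2 : ℝ → ℝ := fun x => f (⌊x⌋₊ + 2) - f (⌊x⌋₊ + 1) with hφ2
    have hφ1m : Measurable φ1 :=
      (measurable_from_nat (f := fun m => f (m + 1))).comp Nat.measurable_floor
    have hφ2m : Measurable φ2 :=
      (measurable_from_nat (f := fun m => f (m + 2) - f (m + 1))).comp Nat.measurable_floor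
    have ind1 : IndepFun (X i) (fun ω => φ1 (Wi ω)) μ := by
      have := (base.symm).comp measurable_id hφ1m
      simpa [Function.comp_def] using this
    have ind2 : IndepFun (X i) (fun ω => φ2 (Wi ω)) μ := by
      have := (base.symm).comp measurable_id hφ2m
      simpa [Function.comp_def] using this
    have hXiint : Integrable (X i) μ := integ μ (hX i) (hXb i)
    have hφ1Wi : ∀ ω, φ1 (Wi ω) = f (Ni ω + 1) := by
      intro ω; rw [hφ1]; simp only; rw [hNifloor ω]
    have hφ2Wi : ∀ ω, φ2 (Wi ω) = f (Ni ω + 2) - f (Ni ω + 1) := by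
      intro ω; rw [hφ2]; simp only; rw [hNifloor ω]
    have hφ1int : Integrable (fun ω => φ1 (Wi ω)) μ := by
      refine integ μ (hφ1m.comp hWim) (K := Kf) (fun ω => ?_)
      rw [hφ1Wi ω]
      exact hKfb _ (by have := hNile ω; omega)
    have hφ2int : Integrable (fun ω => φ2 (Wi ω)) μ := by
      refine integ μ (hφ2m.comp hWim) (K := 1 / l) (fun ω => ?_)
      rw [hφ2Wi ω]
      exact abs_delta_le hl B (Ni ω)
    have hXiφ1int : Integrable (fun ω => X i ω * φ1 (Wi ω)) μ := by
      refine integ μ ((hX i).mul (hφ1m.comp hWim)) (K := Kf) (fun ω => ?_)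
      rw [abs_mul, hφ1Wi ω]
      calc |X i ω| * |f (Ni ω + 1)| ≤ 1 * |f (Ni ω + 1)| :=
            mul_le_mul_of_nonneg_right (hXb i ω) (abs_nonneg _)
        _ = |f (Ni ω + 1)| := one_mul _
        _ ≤ Kf := hKfb _ (by have := hNile ω; omega)
    -- step 1 : ∫ Xᵢ f(N) = ∫ Xᵢ φ1(Wi)
    have e1 : (∫ ω, X i ω * f (N ω) ∂μ) = ∫ ω, X i ω * φ1 (Wi ω) ∂μ := by
      refine integral_congr_ae (Filter.Eventually.of_forall (fun ω => ?_))
      show X i ω * f (N ω) = X i ω * φ1 (Wi ω)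
      rw [hφ1Wi ω]
      rcases hBer i ω with h | h
      · rw [h]; ring
      · have hfl : ⌊X i ω⌋₊ = 1 := by rw [h]; simp
        rw [hNsplit ω, hfl, h]
    -- step 2 : independence
    have e2 : (∫ ω, X i ω * φ1 (Wi ω) ∂μ) = p i * ∫ ω, φ1 (Wi ω) ∂μ := by
      have := ind1.integral_mul_eq_mul_integral hXiint.aestronglyMeasurable hφ1int.aestronglyMeasurable
      rw [hp i]
      exact this
    -- step 3 : difference
    have e3 : (∫ ω, f (N ω + 1) ∂μ) - (∫ ω, φ1 (Wi ω) ∂μ) = p i * ∫ ω, φ2 (Wi ω) ∂μ := by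
      rw [← integral_sub hg1int hφ1int]
      have ept : ∀ ω, f (N ω + 1) - φ1 (Wi ω) = X i ω * φ2 (Wi ω) := by
        intro ω
        rw [hφ1Wi ω, hφ2Wi ω]
        rcases hBer i ω with h | h
        · have hfl : ⌊X i ω⌋₊ = 0 := by rw [h]; simp
          rw [hNsplit ω, hfl, h]; ring
        · have hfl : ⌊X i ω⌋₊ = 1 := by rw [h]; simp
          rw [hNsplit ω, hfl, h]; ring
      rw [integral_congr_ae (Filter.Eventually.of_forall ept)]
      have := ind2.integral_mul_eq_mul_integral hXiint.aestronglyMeasurable hφ2int.aestronglyMeasurable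
      rw [hp i]
      exact this
    refine ⟨∫ ω, φ2 (Wi ω) ∂μ, ?_, ?_⟩
    · have h := norm_integral_le_of_norm_le_const
        (C := 1 / l) (μ := μ) (f := fun ω => φ2 (Wi ω))
        (Filter.Eventually.of_forall (fun ω => by
          show ‖φ2 (Wi ω)‖ ≤ 1 / l
          rw [Real.norm_eq_abs, hφ2Wi ω]; exact abs_delta_le hl B (Ni ω)))
      simpa using h
    · rw [e1, e2]
      calc p i * (∫ ω, f (N ω + 1) ∂μ) - p i * ∫ ω, φ1 (Wi ω) ∂μ
          = p i * ((∫ ω, f (N ω + 1) ∂μ) - ∫ ω, φ1 (Wi ω) ∂μ) := by ring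
        _ = p i * (p i * ∫ ω, φ2 (Wi ω) ∂μ) := by rw [e3]
        _ = p i ^ 2 * ∫ ω, φ2 (Wi ω) ∂μ := by ring
  choose t ht1 ht2 using main_i
  -- global identity
  have hsum0 : (∫ ω, W ω * f (N ω) ∂μ) = ∑ i, ∫ ω, X i ω * f (N ω) ∂μ := by
    rw [← integral_finset_sum _ (fun i _ => hXifNint i)]
    refine integral_congr_ae (Filter.Eventually.of_forall (fun ω => ?_))
    rw [hWdef]
    simp only
    rw [Finset.sum_mul]
  have hT : ((μ.map W) A).toReal - q = ∑ i, p i ^ 2 * t i := by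
    have ept : ∀ ω, B.indicator (fun _ => (1:ℝ)) (N ω)
        = l * f (N ω + 1) - W ω * f (N ω) + q := by
      intro ω
      have h := stein_eq hl B q (N ω)
      rw [hNcast ω] at h
      rw [hfdef]
      linarith [h]
    have hind : ((μ.map W) A).toReal = ∫ ω, B.indicator (fun _ => (1:ℝ)) (N ω) ∂μ := by
      rw [hmap, ← measureReal_def, ← integral_indicator_one (hNm hBmeas)]
      refine integral_congr_ae (Filter.Eventually.of_forall (fun ω => ?_))
      by_cases h : N ω ∈ B
      · simp [Set.indicator_of_mem, h, Set.mem_preimage]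
      · simp [Set.indicator_of_notMem, h, Set.mem_preimage]
    have hint_main : Integrable (fun a => l * f (N a + 1) - W a * f (N a)) μ :=
      (hg1int.const_mul l).sub hWfNint
    rw [hind, integral_congr_ae (Filter.Eventually.of_forall ept)]
    rw [integral_add hint_main (integrable_const q)]
    rw [integral_sub (hg1int.const_mul l) hWfNint, integral_const_mul, integral_const]
    simp only [probReal_univ, measure_univ, ENNReal.toReal_one, smul_eq_mul, one_mul]
    rw [hsum0]
    have : l * ∫ ω, f (N ω + 1) ∂μ = ∑ i, p i * ∫ ω, f (N ω + 1) ∂μ := by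
      rw [hldef, Finset.sum_mul]
    rw [this, ← Finset.sum_sub_distrib]
    have : ∀ i ∈ Finset.univ, p i * (∫ ω, f (N ω + 1) ∂μ) - (∫ ω, X i ω * f (N ω) ∂μ)
        = p i ^ 2 * t i := fun i _ => ht2 i
    rw [Finset.sum_congr rfl this]
    ring
  -- final bound
  rw [hPoisson, hT]
  calc |∑ i, p i ^ 2 * t i| ≤ ∑ i, |p i ^ 2 * t i| := Finset.abs_sum_le_sum_abs _ _
    _ ≤ ∑ i, p i ^ 2 * (1 / l) := by
        refine Finset.sum_le_sum (fun i _ => ?_)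
        rw [abs_mul, abs_of_nonneg (sq_nonneg (p i))]
        exact mul_le_mul_of_nonneg_left (ht1 i) (sq_nonneg _)
    _ = (∑ i, p i ^ 2) / l := by rw [← Finset.sum_mul]; field_simp
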